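/- For parameters θ̃, θ̂ ∈ P and indices i, j, let u_{i,θ̃}(s) = B(θ̃)ᵀ e^{A(θ̃)ᵀ(T−s)} e_i (standard basis vector e_i). Then ⟨R u_{i,θ̃}, R u_{j,θ̂}⟩_{Im R} = ⟨e_i, Q(θ̃,θ̂) e_j⟩_{ℝⁿ} = ⟨u_{i,θ̃}, u_{j,θ̂}⟩_{L²([0,T],ℝᵐ)}. Consequently R restricted to the closed span U of all such functions u_{i,θ} is an isometric isomorphism onto Im R. -/

import Mathlib

open MeasureTheory Matrix Set NormedSpace Filter
open scoped RealInnerProductSpace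
noncomputable section

/-- Lebesgue measure restricted to `[0,T]`. -/
def muT (T : ℝ) : Measure ℝ := MeasureTheory.volume.restrict (Set.Icc (0:ℝ) T)

/-- The space `L²([0,T], ℝᵐ)`. -/
abbrev L2 (m : ℕ) (T : ℝ) := MeasureTheory.Lp (EuclideanSpace ℝ (Fin m)) 2 (muT T)

/-- Single-parameter reachability map `u ↦ ∫₀ᵀ e^{A(T-s)} B u(s) ds`. -/
def RopK {n m : ℕ} (T : ℝ) (A : Matrix (Fin n) (Fin n) ℝ) (B : Matrix (Fin n) (Fin m) ℝ)
    (u : L2 m T) : EuclideanSpace ℝ (Fin n) :=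
  ∫ s in Set.Icc (0:ℝ) T, WithLp.toLp 2 (((NormedSpace.exp ((T - s) • A)) * B).mulVec (u s))

/-- The adjoint kernel `s ↦ Bᵀ e^{Aᵀ(T-s)} v`. -/
def RadjK {n m : ℕ} (T : ℝ) (A : Matrix (Fin n) (Fin n) ℝ) (B : Matrix (Fin n) (Fin m) ℝ)
    (v : EuclideanSpace ℝ (Fin n)) (s : ℝ) : EuclideanSpace ℝ (Fin m) :=
  WithLp.toLp 2 ((Bᵀ * NormedSpace.exp ((T - s) • Aᵀ)).mulVec v)

/-- Parametrized reachability operator `(Ru)(θ)`. -/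
def RopFam {n m : ℕ} (T : ℝ) (A : ℝ → Matrix (Fin n) (Fin n) ℝ)
    (B : ℝ → Matrix (Fin n) (Fin m) ℝ) (u : L2 m T) (θ : ℝ) : EuclideanSpace ℝ (Fin n) :=
  RopK T (A θ) (B θ) u

/-- The reproducing kernel `Q(θ, θ')`. -/
def Qfun {n m : ℕ} (T : ℝ) (A : ℝ → Matrix (Fin n) (Fin n) ℝ)
    (B : ℝ → Matrix (Fin n) (Fin m) ℝ) (θ θ' : ℝ) : Matrix (Fin n) (Fin n) ℝ :=
  Matrix.of fun i j => ∫ s in Set.Icc (0:ℝ) T,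
    (NormedSpace.exp ((T - s) • A θ) * B θ * (B θ')ᵀ * NormedSpace.exp ((T - s) • (A θ')ᵀ)) i j

/-- Controllability Gramian of `(A,B)` on `[0,T]`. -/
def Gram {n m : ℕ} (T : ℝ) (A : Matrix (Fin n) (Fin n) ℝ) (B : Matrix (Fin n) (Fin m) ℝ) :
    Matrix (Fin n) (Fin n) ℝ :=
  Matrix.of fun i j => ∫ s in Set.Icc (0:ℝ) T,
    ((NormedSpace.exp ((T - s) • A)) * B * Bᵀ * (NormedSpace.exp ((T - s) • Aᵀ))) i j

/-- The closed span `U` of the functions `s ↦ B(θ)ᵀ e^{A(θ)ᵀ(T−s)} eᵢ`, `θ ∈ P`. -/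
def Uspan {n m : ℕ} (T θm θp : ℝ) (A : ℝ → Matrix (Fin n) (Fin n) ℝ)
    (B : ℝ → Matrix (Fin n) (Fin m) ℝ) : Set (L2 m T) :=
  closure (Submodule.span ℝ {w : L2 m T | ∃ θ ∈ Set.Icc θm θp, ∃ i : Fin n,
    ∀ᵐ s ∂(muT T), w s = RadjK T (A θ) (B θ) (EuclideanSpace.single i 1) s} : Set (L2 m T))

/-! ### Auxiliary lemmas -/

instance muT.isFiniteMeasure (T : ℝ) : IsFiniteMeasure (muT T) := by
  unfold muT; infer_instance

/-- `mulVec` considered as a map into Euclidean space. -/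
def mulVecE {n m : ℕ} (M : Matrix (Fin n) (Fin m) ℝ) (v : EuclideanSpace ℝ (Fin m)) :
    EuclideanSpace ℝ (Fin n) := WithLp.toLp 2 (M.mulVec v)

lemma mulVecE_apply {n m : ℕ} (M : Matrix (Fin n) (Fin m) ℝ) (v : EuclideanSpace ℝ (Fin m))
    (i : Fin n) : mulVecE M v i = ∑ k, M i k * v k := rfl

lemma coord_le_norm {m : ℕ} (x : EuclideanSpace ℝ (Fin m)) (k : Fin m) : |x k| ≤ ‖x‖ := by
  have h := abs_real_inner_le_norm (EuclideanSpace.single k (1:ℝ)) x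
  simpa [EuclideanSpace.inner_single_left, EuclideanSpace.norm_single] using h

lemma euclid_norm_le_sum {m : ℕ} (x : EuclideanSpace ℝ (Fin m)) : ‖x‖ ≤ ∑ k, |x k| := by
  rw [EuclideanSpace.norm_eq]
  have h1 : ∑ k, ‖x k‖ ^ 2 ≤ (∑ k, |x k|) ^ 2 := by
    simpa [Real.norm_eq_abs] using
      Finset.sum_sq_le_sq_sum_of_nonneg (f := fun k => |x k|)
        (fun k _ => abs_nonneg _) (s := Finset.univ)
  calc Real.sqrt (∑ k, ‖x k‖ ^ 2) ≤ Real.sqrt ((∑ k, |x k|) ^ 2) := Real.sqrt_le_sqrt h1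
    _ = ∑ k, |x k| := Real.sqrt_sq (Finset.sum_nonneg fun k _ => abs_nonneg _)

lemma mulVecE_norm_le {n m : ℕ} (M : Matrix (Fin n) (Fin m) ℝ) (v : EuclideanSpace ℝ (Fin m)) :
    ‖mulVecE M v‖ ≤ (∑ i, ∑ k, |M i k|) * ‖v‖ := by
  refine (euclid_norm_le_sum _).trans ?_
  rw [Finset.sum_mul]
  refine Finset.sum_le_sum fun i _ => ?_
  calc |mulVecE M v i| = |∑ k, M i k * v k| := by rw [mulVecE_apply]
    _ ≤ ∑ k, |M i k * v k| := Finset.abs_sum_le_sum_abs _ _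
    _ ≤ ∑ k, |M i k| * ‖v‖ := by
        refine Finset.sum_le_sum fun k _ => ?_
        rw [abs_mul]
        exact mul_le_mul_of_nonneg_left (coord_le_norm v k) (abs_nonneg _)
    _ = (∑ k, |M i k|) * ‖v‖ := by rw [Finset.sum_mul]

lemma contM {n m : ℕ} (T : ℝ) (Aθ : Matrix (Fin n) (Fin n) ℝ) (Bθ : Matrix (Fin n) (Fin m) ℝ)
    (i : Fin n) (k : Fin m) :
    Continuous fun s : ℝ => (NormedSpace.exp ((T - s) • Aθ) * Bθ) i k := by
  have hE : Continuous fun s : ℝ => NormedSpace.exp ((T - s) • Aθ) := by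
    letI : NormedRing (Matrix (Fin n) (Fin n) ℝ) := Matrix.linftyOpNormedRing
    letI : NormedAlgebra ℝ (Matrix (Fin n) (Fin n) ℝ) := Matrix.linftyOpNormedAlgebra
    letI : NormedAlgebra ℚ (Matrix (Fin n) (Fin n) ℝ) := NormedAlgebra.restrictScalars ℚ ℝ _
    exact exp_continuous.comp ((continuous_const.sub continuous_id).smul continuous_const)
  simp only [Matrix.mul_apply]
  exact continuous_finset_sum _ fun l _ =>
    (((continuous_apply l).comp ((continuous_apply i).comp hE))).mul continuous_const

lemma integrable_mulVec {n m : ℕ} (T : ℝ) (Aθ : Matrix (Fin n) (Fin n) ℝ)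
    (Bθ : Matrix (Fin n) (Fin m) ℝ) (g : L2 m T) :
    Integrable (fun s => mulVecE (NormedSpace.exp ((T - s) • Aθ) * Bθ) (g s)) (muT T) := by
  set M : ℝ → Matrix (Fin n) (Fin m) ℝ := fun s => NormedSpace.exp ((T - s) • Aθ) * Bθ with hM
  have hMik : ∀ i k, Continuous fun s => M s i k := fun i k => contM T Aθ Bθ i k
  have hcc : Continuous fun s => ∑ i, ∑ k, |M s i k| :=
    continuous_finset_sum _ fun i _ => continuous_finset_sum _ fun k _ => (hMik i k).abs
  obtain ⟨C, hC⟩ := (isCompact_Icc (a := (0:ℝ)) (b := T)).exists_bound_of_continuousOn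
    hcc.continuousOn
  have hg1 : Integrable (fun s => ‖g s‖) (muT T) :=
    (((Lp.memLp g).mono_exponent (p := 1) (by norm_num)).integrable le_rfl).norm
  obtain ⟨g', hg'meas, hg'ae⟩ := Lp.aestronglyMeasurable g
  have hmeas : AEStronglyMeasurable (fun s => mulVecE (M s) (g s)) (muT T) := by
    refine ⟨fun s => mulVecE (M s) (g' s), ?_, ?_⟩
    · rw [stronglyMeasurable_iff_measurable]
      refine (WithLp.measurable_toLp 2 _).comp ?_
      apply measurable_pi_iff.mpr
      intro i
      simp only [Matrix.mulVec, dotProduct]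
      refine Finset.measurable_sum _ fun k _ => ?_
      exact ((hMik i k).measurable).mul
        ((measurable_pi_apply k).comp ((WithLp.measurable_ofLp 2 _).comp hg'meas.measurable))
    · filter_upwards [hg'ae] with s hs
      rw [hs]
  refine Integrable.mono' (hg1.const_mul C) hmeas ?_
  have hae : ∀ᵐ s ∂(muT T), s ∈ Set.Icc (0:ℝ) T := by
    unfold muT; exact ae_restrict_mem measurableSet_Icc
  filter_upwards [hae] with s hs
  calc ‖mulVecE (M s) (g s)‖ ≤ (∑ i, ∑ k, |M s i k|) * ‖g s‖ := mulVecE_norm_le _ _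
    _ ≤ C * ‖g s‖ := mul_le_mul_of_nonneg_right
        ((le_abs_self _).trans (by simpa using hC s hs)) (norm_nonneg _)

lemma ptwise1 {n m : ℕ} (T : ℝ) (Aθ : Matrix (Fin n) (Fin n) ℝ)
    (Bθ : Matrix (Fin n) (Fin m) ℝ) (s : ℝ) (i : Fin n) (x : EuclideanSpace ℝ (Fin m)) :
    ⟪RadjK T Aθ Bθ (EuclideanSpace.single i 1) s, x⟫ =
      mulVecE (NormedSpace.exp ((T - s) • Aθ) * Bθ) x i := by
  have hE : NormedSpace.exp ((T - s) • Aθᵀ) = (NormedSpace.exp ((T - s) • Aθ))ᵀ := by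
    rw [← Matrix.transpose_smul, Matrix.exp_transpose]
  simp only [RadjK, hE, PiLp.inner_apply, mulVecE_apply, Matrix.mulVec, Matrix.mul_apply,
    dotProduct, RCLike.inner_apply, conj_trivial, EuclideanSpace.single_apply,
    Matrix.transpose_apply, mul_ite, mul_one, mul_zero, Finset.sum_ite_eq', Finset.mem_univ,
    if_true]
  refine Finset.sum_congr rfl fun k _ => ?_
  rw [Finset.mul_sum, Finset.sum_mul]
  exact Finset.sum_congr rfl fun l _ => by ring

lemma ptwise2 {n m : ℕ} (T : ℝ) (A1 A2 : Matrix (Fin n) (Fin n) ℝ)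
    (B1 B2 : Matrix (Fin n) (Fin m) ℝ) (s : ℝ) (i j : Fin n) :
    ⟪RadjK T A1 B1 (EuclideanSpace.single i 1) s, RadjK T A2 B2 (EuclideanSpace.single j 1) s⟫ =
      (NormedSpace.exp ((T - s) • A1) * B1 * B2ᵀ * NormedSpace.exp ((T - s) • A2ᵀ)) i j := by
  rw [ptwise1]
  have hE : NormedSpace.exp ((T - s) • A2ᵀ) = (NormedSpace.exp ((T - s) • A2))ᵀ := by
    rw [← Matrix.transpose_smul, Matrix.exp_transpose]
  simp only [RadjK, hE, mulVecE_apply, Matrix.mulVec, Matrix.mul_apply, dotProduct,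
    EuclideanSpace.single_apply, Matrix.transpose_apply, mul_ite, mul_one, mul_zero,
    Finset.sum_ite_eq', Finset.mem_univ, if_true, Finset.sum_mul, Finset.mul_sum]
  rw [Finset.sum_comm]
  refine Finset.sum_congr rfl fun k _ => Finset.sum_congr rfl fun l _ => ?_
  ring_nf
  exact Finset.sum_congr rfl fun _ _ => by ring

lemma inner_eq_RopK {n m : ℕ} (T : ℝ) (Aθ : Matrix (Fin n) (Fin n) ℝ)
    (Bθ : Matrix (Fin n) (Fin m) ℝ) (g v : L2 m T) (i : Fin n)
    (hv : ∀ᵐ s ∂(muT T), v s = RadjK T Aθ Bθ (EuclideanSpace.single i 1) s) :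
    ⟪v, g⟫ = RopK T Aθ Bθ g i := by
  have hint := integrable_mulVec T Aθ Bθ g
  have hRop : RopK T Aθ Bθ g = ∫ s, mulVecE (NormedSpace.exp ((T - s) • Aθ) * Bθ) (g s) ∂(muT T) := rfl
  have hproj := (EuclideanSpace.proj (𝕜 := ℝ) i).integral_comp_comm hint
  have h1 : RopK T Aθ Bθ g i
      = ∫ s, mulVecE (NormedSpace.exp ((T - s) • Aθ) * Bθ) (g s) i ∂(muT T) := by
    rw [hRop]
    exact hproj.symm
  rw [MeasureTheory.L2.inner_def, h1]
  refine integral_congr_ae ?_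
  filter_upwards [hv] with s hs
  rw [hs]
  exact ptwise1 T Aθ Bθ s i (g s)

/-! ### Main theorem -/

/-- with `u_{i,θ̃}(s) = B(θ̃)ᵀ e^{A(θ̃)ᵀ(T−s)} eᵢ` we have
`⟨R u_{i,θ̃}, R u_{j,θ̂}⟩_{Im R} = ⟨eᵢ, Q(θ̃,θ̂) eⱼ⟩ = ⟨u_{i,θ̃}, u_{j,θ̂}⟩_{L²}`
(the `Im R` inner product being computed through the minimal-norm solutions `w₁, w₂`);
consequently `R` is isometric on the closed span `U` of these functions: every `u ∈ U`
is the minimal-norm solution over its own image. -/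
theorem kernel_sections_isometry {n m : ℕ} (T θm θp : ℝ) (hT : 0 < T) (hθ : θm ≤ θp)
    (A : ℝ → Matrix (Fin n) (Fin n) ℝ) (B : ℝ → Matrix (Fin n) (Fin m) ℝ)
    (hA : ∀ i j, Continuous fun θ => A θ i j) (hB : ∀ i j, Continuous fun θ => B θ i j)
    (θt θh : ℝ) (hθt : θt ∈ Set.Icc θm θp) (hθh : θh ∈ Set.Icc θm θp) (i j : Fin n)
    (ui uj : L2 m T)
    (hui : ∀ᵐ s ∂(muT T), ui s = RadjK T (A θt) (B θt) (EuclideanSpace.single i 1) s)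
    (huj : ∀ᵐ s ∂(muT T), uj s = RadjK T (A θh) (B θh) (EuclideanSpace.single j 1) s)
    (w1 w2 : L2 m T)
    (hw1 : ∀ θ ∈ Set.Icc θm θp, RopFam T A B w1 θ = RopFam T A B ui θ)
    (hw1min : ∀ w : L2 m T,
      (∀ θ ∈ Set.Icc θm θp, RopFam T A B w θ = RopFam T A B ui θ) → ‖w1‖ ≤ ‖w‖)
    (hw2 : ∀ θ ∈ Set.Icc θm θp, RopFam T A B w2 θ = RopFam T A B uj θ)
    (hw2min : ∀ w : L2 m T,
      (∀ θ ∈ Set.Icc θm θp, RopFam T A B w θ = RopFam T A B uj θ) → ‖w2‖ ≤ ‖w‖) :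
    (⟪w1, w2⟫ = Qfun T A B θt θh i j ∧ ⟪w1, w2⟫ = ⟪ui, uj⟫) ∧
      ∀ u ∈ Uspan T θm θp A B, ∀ w : L2 m T,
        (∀ θ ∈ Set.Icc θm θp, RopFam T A B w θ = RopFam T A B u θ) → ‖u‖ ≤ ‖w‖ := by
  -- key orthogonality fact
  have key : ∀ (w u : L2 m T), (∀ θ ∈ Set.Icc θm θp, RopFam T A B w θ = RopFam T A B u θ) →
      ∀ x ∈ Uspan T θm θp A B, ⟪x, w⟫ = ⟪x, u⟫ := by
    intro w u h x hx
    set d := w - u with hd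
    have hgen : ∀ v ∈ {w' : L2 m T | ∃ θ ∈ Set.Icc θm θp, ∃ i' : Fin n,
        ∀ᵐ s ∂(muT T), w' s = RadjK T (A θ) (B θ) (EuclideanSpace.single i' 1) s},
        ⟪v, d⟫ = 0 := by
      rintro v ⟨θ, hθ', i', hv⟩
      have h1 : ⟪v, w⟫ = ⟪v, u⟫ := by
        rw [inner_eq_RopK T (A θ) (B θ) w v i' hv, inner_eq_RopK T (A θ) (B θ) u v i' hv]
        have h2 : RopK T (A θ) (B θ) w = RopK T (A θ) (B θ) u := h θ hθ'
        rw [h2]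
      rw [hd, inner_sub_right, h1, sub_self]
    have hker : Uspan T θm θp A B ⊆ ((innerSL ℝ d).ker : Set (L2 m T)) := by
      rw [Uspan]
      refine closure_minimal ?_ (ContinuousLinearMap.isClosed_ker _)
      refine (Submodule.span_le.mpr ?_)
      intro v hv
      simp only [SetLike.mem_coe, LinearMap.mem_ker]
      have := hgen v hv
      simpa [real_inner_comm] using this
    have hx0 : ⟪x, d⟫ = 0 := by
      have := hker hx
      simp only [SetLike.mem_coe, LinearMap.mem_ker] at this
      rw [real_inner_comm]
      simpa using this
    have := hx0
    rw [hd, inner_sub_right, sub_eq_zero] at this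
    exact this
  -- minimal-norm property on Uspan
  have normle : ∀ u ∈ Uspan T θm θp A B, ∀ w : L2 m T,
      (∀ θ ∈ Set.Icc θm θp, RopFam T A B w θ = RopFam T A B u θ) → ‖u‖ ≤ ‖w‖ := by
    intro u hu w hw
    have h1 : ⟪u, w⟫ = ⟪u, u⟫ := key w u hw u hu
    have h3 : ⟪u, w - u⟫ = 0 := by rw [inner_sub_right, h1, sub_self]
    have e : u + (w - u) = w := by abel
    have h2 : ‖w‖ ^ 2 = ‖u‖ ^ 2 + 2 * ⟪u, w - u⟫ + ‖w - u‖ ^ 2 := by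
      conv_lhs => rw [← e]
      exact norm_add_sq_real u (w - u)
    nlinarith [norm_nonneg (w - u), norm_nonneg u, norm_nonneg w, sq_nonneg (‖w - u‖)]
  -- ui, uj are in Uspan
  have hui_mem : ui ∈ Uspan T θm θp A B :=
    subset_closure (Submodule.subset_span ⟨θt, hθt, i, hui⟩)
  have huj_mem : uj ∈ Uspan T θm θp A B :=
    subset_closure (Submodule.subset_span ⟨θh, hθh, j, huj⟩)
  -- minimal-norm solutions agree with the sections
  have hmin_eq : ∀ (u w : L2 m T), u ∈ Uspan T θm θp A B →
      (∀ θ ∈ Set.Icc θm θp, RopFam T A B w θ = RopFam T A B u θ) →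
      (∀ w' : L2 m T,
        (∀ θ ∈ Set.Icc θm θp, RopFam T A B w' θ = RopFam T A B u θ) → ‖w‖ ≤ ‖w'‖) →
      w = u := by
    intro u w hu hw hwmin
    have hle : ‖w‖ ≤ ‖u‖ := hwmin u (fun θ _ => rfl)
    have hge : ‖u‖ ≤ ‖w‖ := normle u hu w hw
    have heq : ‖w‖ = ‖u‖ := le_antisymm hle hge
    have h1 : ⟪u, w⟫ = ⟪u, u⟫ := key w u hw u hu
    have h3 : ⟪u, w - u⟫ = 0 := by rw [inner_sub_right, h1, sub_self]
    have e : u + (w - u) = w := by abel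
    have h2 : ‖w‖ ^ 2 = ‖u‖ ^ 2 + 2 * ⟪u, w - u⟫ + ‖w - u‖ ^ 2 := by
      conv_lhs => rw [← e]
      exact norm_add_sq_real u (w - u)
    have h4 : ‖w - u‖ ^ 2 = 0 := by rw [h3, heq] at h2; linarith
    have h5 : ‖w - u‖ = 0 := by
      have := sq_eq_zero_iff.mp h4
      exact this
    rwa [norm_sub_eq_zero_iff] at h5
  have hw1eq : w1 = ui := hmin_eq ui w1 hui_mem hw1 hw1min
  have hw2eq : w2 = uj := hmin_eq uj w2 huj_mem hw2 hw2min
  -- the inner product equals the kernel entry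
  have hQ : ⟪ui, uj⟫ = Qfun T A B θt θh i j := by
    rw [MeasureTheory.L2.inner_def]
    have hQdef : Qfun T A B θt θh i j
        = ∫ s, (NormedSpace.exp ((T - s) • A θt) * B θt * (B θh)ᵀ * NormedSpace.exp ((T - s) • (A θh)ᵀ)) i j
            ∂(muT T) := rfl
    rw [hQdef]
    refine integral_congr_ae ?_
    filter_upwards [hui, huj] with s h1 h2
    rw [h1, h2]
    exact ptwise2 T (A θt) (A θh) (B θt) (B θh) s i j
  refine ⟨⟨?_, ?_⟩, normle⟩
  · rw [hw1eq, hw2eq]; exact hQ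
  · rw [hw1eq, hw2eq]
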